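/- Exponential weights regret bound (normalized EG): Running the normalized exponentiated-gradient algorithm with step size η = 1/2 on a sequence of linear losses ⟨z_i, ·⟩ over the probability simplex Δ_A, where 0 ≤ z_i ≤ 1 coordinatewise, produces iterates w_1,…,w_T such that for any u ∈ Δ_A with Σ_{i=1}^T ⟨z_i, u⟩ = 0, it holds that Σ_{i=1}^T ⟨w_i − u, z_i⟩ ≤ 4 log|A|. -/

import Mathlib

open Finset

noncomputable section

/-- Normalized exponentiated-gradient (exponential weights) regret bound with step size
`η = 1/2` on linear losses `z_i ∈ [0,1]^A`: for any comparator `u` in the simplex with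
zero total loss, the regret is at most `4 log |A|`. -/
theorem normalized_eg_regret
    {A : Type*} [Fintype A] [Nonempty A]
    (T : ℕ) (z : ℕ → A → ℝ) (hz : ∀ i a, 0 ≤ z i a ∧ z i a ≤ 1)
    (w : ℕ → A → ℝ)
    (hw0 : ∀ a, w 0 a = 1 / (Fintype.card A : ℝ))
    (hwstep : ∀ i a, w (i + 1) a =
      w i a * Real.exp (-(1/2) * z i a) / ∑ b, w i b * Real.exp (-(1/2) * z i b))
    (u : A → ℝ) (hu : (∀ a, 0 ≤ u a) ∧ ∑ a, u a = 1)
    (huz : ∑ i ∈ Finset.range T, ∑ a, u a * z i a = 0) :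
    ∑ i ∈ Finset.range T, ∑ a, (w i a - u a) * z i a ≤
      4 * Real.log (Fintype.card A : ℝ) := by
  obtain ⟨hu0, hus⟩ := hu
  have hn : (1:ℝ) ≤ (Fintype.card A : ℝ) := by exact_mod_cast Fintype.card_pos
  have hnpos : (0:ℝ) < (Fintype.card A : ℝ) := lt_of_lt_of_le one_pos hn
  -- positivity of weights
  have hwpos : ∀ i a, 0 < w i a := by
    intro i
    induction i with
    | zero => intro a; rw [hw0]; positivity
    | succ i ih =>
      intro a
      have hden : 0 < ∑ b, w i b * Real.exp (-(1/2) * z i b) :=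
        Finset.sum_pos (fun b _ => mul_pos (ih b) (Real.exp_pos _)) univ_nonempty
      rw [hwstep]
      exact div_pos (mul_pos (ih a) (Real.exp_pos _)) hden
  set Z : ℕ → ℝ := fun i => ∑ b, w i b * Real.exp (-(1/2) * z i b) with hZ
  have hZpos : ∀ i, 0 < Z i :=
    fun i => Finset.sum_pos (fun b _ => mul_pos (hwpos i b) (Real.exp_pos _)) univ_nonempty
  -- weights sum to 1
  have hwsum : ∀ i, ∑ a, w i a = 1 := by
    intro i
    induction i with
    | zero =>
      simp only [hw0, Finset.sum_const, Finset.card_univ, nsmul_eq_mul]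
      field_simp
    | succ i ih =>
      simp only [hwstep]
      rw [← Finset.sum_div, div_self (hZpos i).ne']
  set L : ℕ → ℝ := fun i => ∑ a, w i a * z i a with hL
  have hLnn : ∀ i, 0 ≤ L i :=
    fun i => Finset.sum_nonneg fun a _ => mul_nonneg (hwpos i a).le (hz i a).1
  -- pointwise exponential bound
  have key : ∀ y : ℝ, 0 ≤ y → y ≤ 1 → Real.exp (-(1/2) * y) ≤ 1 - y/4 := by
    intro y hy hy1
    have hE : 0 < Real.exp ((1/2) * y) := Real.exp_pos _
    have hE1 : (1/2) * y + 1 ≤ Real.exp ((1/2) * y) := Real.add_one_le_exp _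
    have h3 : 1 ≤ (1 - y/4) * Real.exp ((1/2) * y) := by nlinarith
    have h4 : (Real.exp ((1/2)*y))⁻¹ ≤ (Real.exp ((1/2)*y))⁻¹ * ((1 - y/4) * Real.exp ((1/2)*y)) :=
      le_mul_of_one_le_right (inv_pos.mpr hE).le h3
    have h5 : (Real.exp ((1/2)*y))⁻¹ * ((1 - y/4) * Real.exp ((1/2)*y)) = 1 - y/4 := by
      field_simp
    rw [show -(1/2) * y = -((1/2)*y) by ring, Real.exp_neg]
    linarith [h4, h5.symm ▸ h4]
  -- Z i ≤ 1 - L i / 4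
  have hZle : ∀ i, Z i ≤ 1 - L i / 4 := by
    intro i
    have h1 : Z i ≤ ∑ a, w i a * (1 - z i a / 4) := by
      apply Finset.sum_le_sum
      intro a _
      exact mul_le_mul_of_nonneg_left (key _ (hz i a).1 (hz i a).2) (hwpos i a).le
    have h2 : ∑ a, w i a * (1 - z i a / 4) = 1 - L i / 4 := by
      simp only [mul_sub, mul_one, Finset.sum_sub_distrib, hwsum i, hL]
      rw [Finset.sum_div]
      simp [mul_div_assoc]
    linarith
  have hlogZ : ∀ i, Real.log (Z i) ≤ - (L i / 4) := by
    intro i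
    have := Real.log_le_sub_one_of_pos (hZpos i)
    have := hZle i
    linarith
  -- comparator coordinate with u a* > 0
  obtain ⟨astar, hastar⟩ : ∃ a, 0 < u a := by
    by_contra h
    push_neg at h
    have : ∀ a ∈ (univ : Finset A), u a = 0 := fun a _ => le_antisymm (h a) (hu0 a)
    rw [Finset.sum_eq_zero this] at hus
    norm_num at hus
  have hzstar : ∀ i ∈ Finset.range T, z i astar = 0 := by
    intro i hi
    have houter : ∀ j ∈ Finset.range T, (0:ℝ) ≤ ∑ a, u a * z j a :=
      fun j _ => Finset.sum_nonneg fun a _ => mul_nonneg (hu0 a) (hz j a).1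
    have hinner : ∑ a, u a * z i a = 0 :=
      (Finset.sum_eq_zero_iff_of_nonneg houter).mp huz i hi
    have h0 : u astar * z i astar = 0 :=
      (Finset.sum_eq_zero_iff_of_nonneg
        (fun a _ => mul_nonneg (hu0 a) (hz i a).1)).mp hinner astar (mem_univ _)
    rcases mul_eq_zero.mp h0 with h | h
    · exact absurd h hastar.ne'
    · exact h
  -- telescoping of log weights at astar
  have htel : ∀ m, m ≤ T →
      Real.log (w m astar) = Real.log (w 0 astar) - ∑ i ∈ Finset.range m, Real.log (Z i) := by
    intro m
    induction m with
    | zero => simp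
    | succ m ih =>
      intro hm
      have hm' : m ≤ T := Nat.le_of_succ_le hm
      have hz0 : z m astar = 0 := hzstar m (Finset.mem_range.mpr hm)
      have : w (m+1) astar = w m astar / Z m := by
        rw [hwstep, hz0]
        simp only [mul_zero, neg_zero, Real.exp_zero, mul_one]
        rfl
      rw [this, Real.log_div (hwpos m astar).ne' (hZpos m).ne', ih hm',
        Finset.sum_range_succ]
      ring
  -- lower bound on sum of log Z
  have hwTle : w T astar ≤ 1 := by
    have := Finset.single_le_sum (f := fun a => w T a)
      (fun a _ => (hwpos T a).le) (mem_univ astar)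
    rw [hwsum T] at this
    exact this
  have hsumlogZ : -(Real.log (Fintype.card A : ℝ)) ≤ ∑ i ∈ Finset.range T, Real.log (Z i) := by
    have h1 := htel T le_rfl
    have h2 : Real.log (w 0 astar) = -(Real.log (Fintype.card A : ℝ)) := by
      rw [hw0, one_div, Real.log_inv]
    have h3 : Real.log (w T astar) ≤ 0 := Real.log_nonpos (hwpos T astar).le hwTle
    linarith [h1, h2 ▸ h1]
  -- combine
  have hsumL : ∑ i ∈ Finset.range T, L i ≤ 4 * Real.log (Fintype.card A : ℝ) := by
    have h1 : ∑ i ∈ Finset.range T, Real.log (Z i) ≤ ∑ i ∈ Finset.range T, -(L i / 4) :=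
      Finset.sum_le_sum fun i _ => hlogZ i
    have h2 : ∑ i ∈ Finset.range T, -(L i / 4) = -((∑ i ∈ Finset.range T, L i) / 4) := by
      rw [Finset.sum_div]
      exact Finset.sum_neg_distrib _
    linarith [hsumlogZ, h1, h2 ▸ h1]
  have hfinal : ∑ i ∈ Finset.range T, ∑ a, (w i a - u a) * z i a
      = ∑ i ∈ Finset.range T, L i := by
    have : ∀ i, ∑ a, (w i a - u a) * z i a = L i - ∑ a, u a * z i a := by
      intro i
      simp only [sub_mul, Finset.sum_sub_distrib, hL]
    rw [Finset.sum_congr rfl fun i _ => this i, Finset.sum_sub_distrib, huz]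
    ring
  rw [hfinal]
  exact hsumL
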